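/- Discrete equivalence of minimizers: let b_* and b be symmetric bilinear forms on a Hilbert space X with b(x,y) = b_*(x,y) + s(x)s(y) for a continuous linear functional s, let L be a continuous linear functional, and let X_h ⊆ X be a closed subspace containing an element e with b_*(x,e) = 0 for all x ∈ X_h, L(e) = 0, and s(e) ≠ 0. Set X_{*,h} := X_h ∩ ker s. If b is coercive on X_h and b_* is coercive on X_{*,h}, then the unique solution x_* ∈ X_{*,h} of b_*(x_*,y) = L(y) for all y ∈ X_{*,h} coincides with the unique solution x ∈ X_h of b(x,y) = L(y) for all y ∈ X_h. -/

import Mathlib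

/-- Discrete equivalence of minimizers (abstract Hilbert-space form): let `b_*` and `b`
be symmetric bilinear forms on a Hilbert space `X` with `b(x,y) = b_*(x,y) + s(x)s(y)`
for a continuous linear functional `s`, let `L` be a continuous linear functional, and
let `X_h ⊆ X` be a closed subspace containing `e` with `b_*(x,e) = 0` for all `x ∈ X_h`,
`L(e) = 0`, `s(e) ≠ 0`. If `b` is coercive on `X_h` and `b_*` is coercive on
`X_{*,h} = X_h ∩ ker s`, then the solution `x_* ∈ X_{*,h}` of
`b_*(x_*, y) = L(y)` for all `y ∈ X_{*,h}` coincides with the solution `x ∈ X_h` of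
`b(x, y) = L(y)` for all `y ∈ X_h` (each is unique by coercivity). -/
theorem stmt17 {X : Type*} [NormedAddCommGroup X] [InnerProductSpace ℝ X]
    [CompleteSpace X]
    (bstar : X →ₗ[ℝ] X →ₗ[ℝ] ℝ) (hbstarSym : ∀ x y, bstar x y = bstar y x)
    (s L : X →L[ℝ] ℝ)
    (b : X → X → ℝ) (hb : ∀ x y, b x y = bstar x y + s x * s y)
    (Xh : Submodule ℝ X) (hXh : IsClosed (Xh : Set X))
    (e : X) (he : e ∈ Xh) (hbe : ∀ x ∈ Xh, bstar x e = 0)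
    (hLe : L e = 0) (hse : s e ≠ 0)
    (α : ℝ) (hα : 0 < α) (hcoer : ∀ x ∈ Xh, α * ‖x‖ ^ 2 ≤ b x x)
    (β : ℝ) (hβ : 0 < β) (hcoerstar : ∀ x ∈ Xh, s x = 0 → β * ‖x‖ ^ 2 ≤ bstar x x)
    (xstar : X) (hxs1 : xstar ∈ Xh) (hxs2 : s xstar = 0)
    (hxs3 : ∀ y ∈ Xh, s y = 0 → bstar xstar y = L y)
    (x : X) (hx1 : x ∈ Xh) (hx2 : ∀ y ∈ Xh, b x y = L y) :
    x = xstar := by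
  have hbxs : ∀ y ∈ Xh, b xstar y = L y := by
    intro y hy
    set c : ℝ := s y / s e with hc
    have hy0 : y - c • e ∈ Xh := Xh.sub_mem hy (Xh.smul_mem c he)
    have hsy0 : s (y - c • e) = 0 := by
      have : s (y - c • e) = s y - c * s e := by
        simp [map_sub, map_smul, smul_eq_mul]
      rw [this, hc]; field_simp; ring
    have h1 : bstar xstar (y - c • e) = L (y - c • e) := hxs3 _ hy0 hsy0
    have h2 : bstar xstar e = 0 := hbe xstar hxs1
    have h3 : bstar xstar (y - c • e) = bstar xstar y - c * bstar xstar e := by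
      simp [map_sub, map_smul, smul_eq_mul]
    have h4 : L (y - c • e) = L y := by simp [map_sub, map_smul, hLe]
    have h5 : bstar xstar y = L y := by
      rw [h3, h2] at h1; simpa [h4] using h1
    rw [hb]; simp [hxs2, h5]
  set d := x - xstar with hd
  have hdXh : d ∈ Xh := Xh.sub_mem hx1 hxs1
  have hbd : b d d = 0 := by
    have e1 : b x d = L d := hx2 d hdXh
    have e2 : b xstar d = L d := hbxs d hdXh
    have h6 : b d d = b x d - b xstar d := by
      simp only [hb, hd, map_sub, LinearMap.sub_apply]; ring
    rw [h6, e1, e2]; ring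
  have h7 := hcoer d hdXh
  rw [hbd] at h7
  have h8 : ‖d‖ ^ 2 ≤ 0 := le_of_mul_le_mul_left (by linarith) hα
  have hnd : ‖d‖ = 0 := by
    have h9 : ‖d‖ ^ 2 = 0 := le_antisymm h8 (sq_nonneg _)
    exact pow_eq_zero_iff (by norm_num) |>.mp h9
  have hd0 : d = 0 := norm_eq_zero.mp hnd
  exact sub_eq_zero.mp hd0
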